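/- Let d ≥ 2 and for each i ∈ {1,…,n} let κ_i be a permutation of (Z/dZ)^n acting as a d-cycle on the i-th coordinate only. Let f : (Z/dZ)^n → Z/dZ and let |ψ⟩ be any unit vector in C^(d^n) satisfying S_{f,κ_i}|ψ⟩ = |ψ⟩ for all i, where S_{f,κ_i} = X_{κ_i} Z_{f∘κ_i − f}. Then |ψ⟩ equals |f⟩ = d^(-n/2) Σ_x ω^(f(x))|x⟩ up to a global phase. -/

import Mathlib

theorem ffe_state_unique_stabilized (d n : ℕ) [NeZero d] (hd : 2 ≤ d)
    (κ : Fin n → Equiv.Perm (ZMod d))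
    (hκ : ∀ i, (κ i).IsCycle ∧ (κ i).support = Finset.univ)
    (f : (Fin n → ZMod d) → ZMod d) (ψ : (Fin n → ZMod d) → ℂ)
    (hψ : ∑ x : Fin n → ZMod d, Complex.normSq (ψ x) = 1) :
    let ω : ℂ := Complex.exp (2 * (Real.pi : ℂ) * Complex.I / (d : ℂ))
    let K : Fin n → Equiv.Perm (Fin n → ZMod d) := fun i =>
      Equiv.piCongrRight (fun j => if j = i then κ i else Equiv.refl (ZMod d))
    let X : Equiv.Perm (Fin n → ZMod d) → Matrix (Fin n → ZMod d) (Fin n → ZMod d) ℂ :=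
      fun π => Matrix.of fun x y => if x = π y then (1 : ℂ) else 0
    let Z : ((Fin n → ZMod d) → ZMod d) → Matrix (Fin n → ZMod d) (Fin n → ZMod d) ℂ :=
      fun h => Matrix.diagonal fun x => ω ^ (h x).val
    (∀ i, (X (K i) * Z (fun x => f (K i x) - f x)).mulVec ψ = ψ) →
      ∃ c : ℂ, ‖c‖ = 1 ∧
        ψ = c • (fun x => ω ^ (f x).val / (Real.sqrt (d ^ n) : ℂ)) := by
  intro ω K X Z hstab
  have hd0 : (d : ℂ) ≠ 0 := Nat.cast_ne_zero.mpr (NeZero.ne d)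
  -- ω^d = 1
  have hωd : ω ^ d = 1 := by
    show Complex.exp _ ^ d = 1
    rw [← Complex.exp_nat_mul]
    have : (d : ℂ) * (2 * (Real.pi : ℂ) * Complex.I / (d : ℂ))
        = 2 * (Real.pi : ℂ) * Complex.I := by field_simp
    rw [this, Complex.exp_two_pi_mul_I]
  have hωmod : ∀ m : ℕ, ω ^ (m % d) = ω ^ m := by
    intro m
    conv_rhs => rw [← Nat.mod_add_div m d]
    rw [pow_add, pow_mul, hωd, one_pow, mul_one]
  have hωadd : ∀ a b : ZMod d, ω ^ ((a + b).val) = ω ^ a.val * ω ^ b.val := by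
    intro a b
    rw [ZMod.val_add, hωmod, pow_add]
  have hωnorm : ‖ω‖ = 1 := by
    have : (2 * (Real.pi : ℂ) * Complex.I / (d : ℂ))
        = ((2 * Real.pi / d : ℝ) : ℂ) * Complex.I := by push_cast; ring
    show ‖Complex.exp _‖ = 1
    rw [this, Complex.norm_exp]
    simp
  -- the key relation
  have key : ∀ i y, ψ (K i y) = ω ^ ((f (K i y) - f y).val) * ψ y := by
    intro i y
    have h := congrFun (hstab i) (K i y)
    rw [← Matrix.mulVec_mulVec] at h
    have hZ : (Z fun x => f (K i x) - f x).mulVec ψ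
        = fun x => ω ^ ((f (K i x) - f x).val) * ψ x := by
      funext x
      simp [Z, Matrix.mulVec_diagonal]
    rw [hZ] at h
    rw [← h]
    simp only [X, Matrix.mulVec, dotProduct, Matrix.of_apply]
    rw [Finset.sum_eq_single y]
    · simp
    · intro b _ hb
      rw [if_neg, zero_mul]
      exact fun hc => hb ((K i).injective hc.symm)
    · simp
  -- φ is invariant
  set φ : (Fin n → ZMod d) → ℂ := fun x => ψ x * ω ^ ((-(f x)).val) with hφdef
  have hψφ : ∀ x, ψ x = φ x * ω ^ (f x).val := by
    intro x
    simp only [hφdef]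
    rw [mul_assoc, ← hωadd]
    simp
  have hφK : ∀ i y, φ (K i y) = φ y := by
    intro i y
    simp only [hφdef, key i y]
    have h3 := hωadd (f (K i y) - f y) (-(f (K i y)))
    rw [show (f (K i y) - f y) + (-(f (K i y))) = -(f y) by ring] at h3
    rw [h3]; ring
  have hφKpow : ∀ (i) (m : ℕ) (y), φ ((K i ^ m) y) = φ y := by
    intro i m
    induction m with
    | zero => simp
    | succ m ih =>
      intro y
      rw [pow_succ', Equiv.Perm.mul_apply, hφK, ih]
  -- apply of K i ^ m
  have happ : ∀ (i) (m : ℕ) (x) (j), ((K i ^ m) x) j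
      = (((if j = i then κ i else Equiv.refl (ZMod d)) ^ m)) (x j) := by
    intro i m
    induction m with
    | zero => simp
    | succ m ih =>
      intro x j
      rw [pow_succ', Equiv.Perm.mul_apply, pow_succ', Equiv.Perm.mul_apply, ← ih]
      simp [K, Equiv.piCongrRight]
  have hupdate : ∀ (x) (i) (b), φ (Function.update x i b) = φ x := by
    intro x i b
    have hmove : ∀ a : ZMod d, κ i a ≠ a := by
      intro a
      have := (hκ i).2
      rw [← Equiv.Perm.mem_support, this]
      exact Finset.mem_univ a
    obtain ⟨m, hm⟩ := (hκ i).1.exists_pow_eq (hmove (x i)) (hmove b)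
    have : Function.update x i b = (K i ^ m) x := by
      funext j
      rw [happ, Function.update_apply]
      by_cases hj : j = i
      · subst hj; simp [hm]
      · simp [hj, show (Equiv.refl (ZMod d)) = (1 : Equiv.Perm (ZMod d)) from rfl]
    rw [this, hφKpow]
  -- φ is constant
  have hconst : ∀ x y, φ x = φ y := by
    have H : ∀ (s : Finset (Fin n)) (x y : Fin n → ZMod d),
        (∀ j ∉ s, x j = y j) → φ x = φ y := by
      intro s
      induction s using Finset.induction_on with
      | empty =>
        intro x y h
        have : x = y := funext fun j => h j (Finset.notMem_empty j)
        rw [this]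
      | @insert i s his ih =>
        intro x y h
        have h1 : φ x = φ (Function.update x i (y i)) := (hupdate x i (y i)).symm
        rw [h1]
        apply ih
        intro j hj
        rw [Function.update_apply]
        by_cases hji : j = i
        · subst hji; simp
        · simp only [if_neg hji]
          exact h j (by simp [hji, hj])
    intro x y
    exact H Finset.univ x y (fun j hj => absurd (Finset.mem_univ j) hj)
  set c₀ : ℂ := φ (fun _ => 0) with hc₀
  have hψx : ∀ x, ψ x = c₀ * ω ^ (f x).val := by
    intro x
    rw [hψφ x, hconst x (fun _ => 0)]
  -- compute the norm
  have hnormω : ∀ k : ℕ, Complex.normSq (ω ^ k) = 1 := by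
    intro k
    rw [Complex.normSq_eq_norm_sq]
    rw [norm_pow, hωnorm]
    simp
  have hcard : (Fintype.card (Fin n → ZMod d) : ℝ) = (d : ℝ) ^ n := by
    rw [Fintype.card_fun, ZMod.card, Fintype.card_fin]
    push_cast
    ring
  have hsum : ((d : ℝ) ^ n) * Complex.normSq c₀ = 1 := by
    rw [← hψ]
    rw [Finset.sum_congr rfl (fun x _ => by rw [hψx x, Complex.normSq_mul, hnormω, mul_one])]
    rw [Finset.sum_const, Finset.card_univ, nsmul_eq_mul, hcard]
  have hdn_pos : (0 : ℝ) < (d : ℝ) ^ n := by positivity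
  have hsqrt_pos : (0 : ℝ) < Real.sqrt ((d : ℝ) ^ n) := Real.sqrt_pos.mpr hdn_pos
  refine ⟨c₀ * (Real.sqrt ((d : ℝ) ^ n) : ℂ), ?_, ?_⟩
  · rw [norm_mul]
    have h1 : ‖((Real.sqrt ((d : ℝ) ^ n) : ℝ) : ℂ)‖ = Real.sqrt ((d : ℝ) ^ n) := by
      rw [Complex.norm_real, Real.norm_eq_abs, abs_of_pos hsqrt_pos]
    rw [h1]
    have h2 : ‖c₀‖ = Real.sqrt (Complex.normSq c₀) := by
      rw [Complex.norm_def]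
    have hprod : Complex.normSq c₀ * (d : ℝ) ^ n = 1 := by rw [mul_comm]; exact hsum
    rw [h2, ← Real.sqrt_mul (Complex.normSq_nonneg c₀), hprod, Real.sqrt_one]
  · funext x
    simp only [Pi.smul_apply, smul_eq_mul]
    rw [hψx x]
    have hs0 : ((Real.sqrt ((d : ℝ) ^ n) : ℝ) : ℂ) ≠ 0 := by
      exact_mod_cast hsqrt_pos.ne'
    field_simp
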